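/- Let X ⊂ C^n be compact with K-dim X = s < n. Then for every h with 1 < h < n/s and every sufficiently large integer N, there exists a nonzero polynomial P ∈ Z[z_1,...,z_n] of degree at most N, with integer coefficients bounded in absolute value by exp(N^h), such that sup_{z ∈ X} |P(z)| < exp(−N^h). -/

import Mathlib

/-- `D` is a bounded domain in `ℂⁿ`: open, connected and bounded. -/
def IsBoundedDomain (n : ℕ) (D : Set (Fin n → ℂ)) : Prop :=
  IsOpen D ∧ IsConnected D ∧ Bornology.IsBounded D

/-- The set `A_X^D` of functions holomorphic on `D` and bounded by `1` there, regarded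
through their traces on `X`: `N_ε(A_X^D)` is the minimal cardinality of a family of sets of
functions, each of diameter `≤ 2ε` in the uniform metric on `X`, covering all such functions. -/
noncomputable def traceCoverNum (n : ℕ) (D X : Set (Fin n → ℂ)) (ε : ℝ) : ℕ :=
  sInf {N | ∃ C : Finset (Set ((Fin n → ℂ) → ℂ)), C.card = N ∧
    (∀ s ∈ C, ∀ F ∈ s, ∀ G ∈ s, ∀ z ∈ X, dist (F z) (G z) ≤ 2 * ε) ∧
    ∀ F : (Fin n → ℂ) → ℂ, DifferentiableOn ℂ F D → (∀ z ∈ D, ‖F z‖ ≤ 1) →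
      ∃ s ∈ C, F ∈ s}

/-- The ε-entropy `H_ε(A_X^D)`. -/
noncomputable def traceEntropy (n : ℕ) (D X : Set (Fin n → ℂ)) (ε : ℝ) : ℝ :=
  Real.log (traceCoverNum n D X ε)

/-- `Ψ(X,D) = limsup_{ε→0⁺} (log H_ε(A_X^D))/(log log (1/ε)) − 1`. -/
noncomputable def Psi (n : ℕ) (X D : Set (Fin n → ℂ)) : ℝ :=
  Filter.limsup
    (fun ε : ℝ => Real.log (traceEntropy n D X ε) / Real.log (Real.log (1 / ε)))
    (nhdsWithin 0 (Set.Ioi 0)) - 1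

/-- The Kolmogorov dimension of a compact `X ⊆ ℂⁿ`: `Ψ(X,D)` computed for a canonical
bounded domain containing `X` (a ball); by Theorem `thm:indep` this is independent of the
choice of bounded domain. -/
noncomputable def KDim (n : ℕ) (X : Set (Fin n → ℂ)) : ℝ :=
  Psi n X (Metric.ball 0 (sSup (norm '' X) + 1))

open Filter Real MvPolynomial in
lemma diff_finset_prod' {E : Type*} [NormedAddCommGroup E] [NormedSpace ℂ E]
    {ι : Type*} (u : Finset ι) (f : ι → E → ℂ) (hf : ∀ i, Differentiable ℂ (f i)) :
    Differentiable ℂ (fun z => ∏ i ∈ u, f i z) := by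
  classical
  induction u using Finset.induction_on with
  | empty => simpa using differentiable_const (1:ℂ)
  | insert _ _ hni ih =>
      simp only [Finset.prod_insert hni]
      exact (hf _).mul ih

open Filter Real MvPolynomial

set_option maxHeartbeats 1000000 in
/-- if `K-dim X = s < n` then for every `1 < h < n/s` and all sufficiently
large `N` there is a nonzero integer polynomial of degree `≤ N`, with coefficients bounded
by `exp(N^h)`, whose sup on `X` is `< exp(−N^h)`. -/
theorem small_integer_polynomial (n : ℕ) (X : Set (Fin n → ℂ)) (hX : IsCompact X)
    (s : ℝ) (hs : KDim n X = s) (hsn : s < n) (h : ℝ) (h1 : 1 < h) (h2 : h < n / s) :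
    ∃ N₀ : ℕ, ∀ N : ℕ, N₀ ≤ N →
      ∃ P : MvPolynomial (Fin n) ℤ, P ≠ 0 ∧ P.totalDegree ≤ N ∧
        (∀ d : Fin n →₀ ℕ, ((|P.coeff d| : ℤ) : ℝ) ≤ Real.exp ((N : ℝ) ^ h)) ∧
        ∀ z ∈ X, ‖(MvPolynomial.aeval z) P‖ < Real.exp (-(N : ℝ) ^ h) := by
  classical
  have hs0 : 0 < s := by
    rcases lt_trichotomy s 0 with hneg | hzero | hpos
    · have : (n:ℝ)/s ≤ 0 := div_nonpos_of_nonneg_of_nonpos (Nat.cast_nonneg n) hneg.le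
      linarith
    · rw [hzero, div_zero] at h2; linarith
    · exact hpos
  have hnR : (0:ℝ) < n := lt_trans hs0 hsn
  have hn1 : 1 ≤ n := by
    by_contra hc
    push_neg at hc
    interval_cases n
    · simp at hnR
  have hhs : h * s < n := (lt_div_iff₀ hs0).1 h2
  set δ : ℝ := (n - h * s) / (2 * h) with hδdef
  have hh0 : (0:ℝ) < h := by linarith
  have hδ0 : 0 < δ := div_pos (by linarith) (by linarith)
  set c : ℝ := s + 1 + δ with hcdef
  have hc0 : 0 < c := by positivity
  set R : ℝ := sSup (norm '' X) with hRdef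
  have hR0 : 0 ≤ R := Real.sSup_nonneg (by rintro y ⟨x, -, rfl⟩; exact norm_nonneg x)
  set D : Set (Fin n → ℂ) := Metric.ball (0 : Fin n → ℂ) (R + 1) with hDdef
  set f : ℝ → ℝ := fun ε =>
    Real.log (traceEntropy n D X ε) / Real.log (Real.log (1 / ε)) with hfdef
  have hlimsup : limsup f (nhdsWithin 0 (Set.Ioi 0)) = s + 1 := by
    have : Psi n X D = s := hs
    unfold Psi at this
    linarith
  -- the denominator is large for small ε
  have hden : ∀ ε : ℝ, 0 < ε → ε < Real.exp (-Real.exp 1) →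
      Real.exp 1 < Real.log (1/ε) ∧ 1 < Real.log (Real.log (1/ε)) := by
    intro ε hε0 hεe
    have h1ε : Real.exp (Real.exp 1) < 1/ε := by
      have := one_div_lt_one_div_of_lt hε0 hεe
      rwa [Real.exp_neg, one_div, inv_inv] at this
    have hL : Real.exp 1 < Real.log (1/ε) := by
      have := Real.log_lt_log (Real.exp_pos _) h1ε
      rwa [Real.log_exp] at this
    refine ⟨hL, ?_⟩
    have := Real.log_lt_log (Real.exp_pos 1) hL
    rwa [Real.log_exp] at this
  have hIooMem : Set.Ioo (0:ℝ) (Real.exp (-Real.exp 1)) ∈ nhdsWithin (0:ℝ) (Set.Ioi 0) :=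
    Ioo_mem_nhdsGT (Real.exp_pos _)
  have hnumlb : ∀ ε : ℝ, -1 ≤ Real.log (traceEntropy n D X ε) := by
    intro ε
    rcases le_or_gt (traceCoverNum n D X ε) 1 with hM | hM
    · have hz : traceEntropy n D X ε = 0 := by
        unfold traceEntropy
        interval_cases hMM : (traceCoverNum n D X ε) <;> simp
      rw [hz, Real.log_zero]; norm_num
    · have h2M : (2:ℝ) ≤ (traceCoverNum n D X ε : ℝ) := by exact_mod_cast hM
      have hE : Real.log 2 ≤ traceEntropy n D X ε := by
        unfold traceEntropy
        exact Real.log_le_log (by norm_num) h2M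
      have hexp2 : Real.exp (-1) ≤ Real.log 2 := by
        have he1 : (2:ℝ) ≤ Real.exp 1 := by
          have := Real.add_one_le_exp (1:ℝ); linarith
        have hh : Real.exp (-1) ≤ 1/2 := by
          rw [Real.exp_neg]
          rw [inv_le_comm₀ (Real.exp_pos 1) (by norm_num)]
          simpa [one_div] using he1
        have hl2 : (1:ℝ)/2 ≤ Real.log 2 := by
          have := Real.log_two_gt_d9; linarith
        linarith
      calc (-1:ℝ) = Real.log (Real.exp (-1)) := (Real.log_exp _).symm
        _ ≤ Real.log (Real.log 2) := Real.log_le_log (Real.exp_pos _) hexp2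
        _ ≤ Real.log (traceEntropy n D X ε) := by
            apply Real.log_le_log _ hE
            have := Real.log_two_gt_d9; linarith
  have hlow : ∀ᶠ ε in nhdsWithin (0:ℝ) (Set.Ioi 0), -1 ≤ f ε := by
    filter_upwards [hIooMem] with ε hε
    obtain ⟨hε0, hεe⟩ := hε
    obtain ⟨-, hden1⟩ := hden ε hε0 hεe
    have hdpos : (0:ℝ) < Real.log (Real.log (1/ε)) := by linarith
    rw [hfdef]
    simp only
    rw [le_div_iff₀ hdpos]
    have := hnumlb ε
    nlinarith
  have hbdd : IsBoundedUnder (· ≥ ·) (nhdsWithin (0:ℝ) (Set.Ioi 0)) f :=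
    ⟨-1, by simpa [eventually_map] using hlow⟩
  have hcob : IsCoboundedUnder (· ≤ ·) (nhdsWithin (0:ℝ) (Set.Ioi 0)) f :=
    hbdd.isCobounded_flip
  have hbddAbove : IsBoundedUnder (· ≤ ·) (nhdsWithin (0:ℝ) (Set.Ioi 0)) f := by
    by_contra hnb
    have hemp : {a : ℝ | ∀ᶠ ε in nhdsWithin (0:ℝ) (Set.Ioi 0), f ε ≤ a} = ∅ := by
      rw [Set.eq_empty_iff_forall_notMem]
      intro a ha
      exact hnb ⟨a, by simpa [eventually_map] using ha⟩
    have h0 : limsup f (nhdsWithin (0:ℝ) (Set.Ioi 0)) = 0 := by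
      rw [limsup_eq, hemp, Real.sInf_empty]
    rw [hlimsup] at h0; linarith
  -- coverings exist at every scale
  have hfreq : ∃ᶠ ε in nhdsWithin (0:ℝ) (Set.Ioi 0), 0 < f ε :=
    frequently_lt_of_lt_limsup hcob (by rw [hlimsup]; linarith)
  have hcov_all : ∀ ε' : ℝ, 0 < ε' →
      ∃ C : Finset (Set ((Fin n → ℂ) → ℂ)), C.card = traceCoverNum n D X ε' ∧
      (∀ s ∈ C, ∀ F ∈ s, ∀ G ∈ s, ∀ z ∈ X, dist (F z) (G z) ≤ 2 * ε') ∧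
      ∀ F : (Fin n → ℂ) → ℂ, DifferentiableOn ℂ F D → (∀ z ∈ D, ‖F z‖ ≤ 1) →
        ∃ s ∈ C, F ∈ s := by
    intro ε' hε'
    have hmem : Set.Ioo (0:ℝ) (min ε' (Real.exp (-Real.exp 1))) ∈
        nhdsWithin (0:ℝ) (Set.Ioi 0) :=
      Ioo_mem_nhdsGT (lt_min hε' (Real.exp_pos _))
    obtain ⟨ε, hfε, hε0, hεlt⟩ :
        ∃ ε, 0 < f ε ∧ 0 < ε ∧ ε < min ε' (Real.exp (-Real.exp 1)) := by
      obtain ⟨ε, hfε, hx1, hx2⟩ :=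
        (hfreq.and_eventually (eventually_of_mem hmem (fun x hx => hx))).exists
      exact ⟨ε, hfε, hx1, hx2⟩
    obtain ⟨-, hden1⟩ := hden ε hε0 (lt_of_lt_of_le hεlt (min_le_right _ _))
    have hne : {N | ∃ C : Finset (Set ((Fin n → ℂ) → ℂ)), C.card = N ∧
        (∀ s ∈ C, ∀ F ∈ s, ∀ G ∈ s, ∀ z ∈ X, dist (F z) (G z) ≤ 2 * ε) ∧
        ∀ F : (Fin n → ℂ) → ℂ, DifferentiableOn ℂ F D → (∀ z ∈ D, ‖F z‖ ≤ 1) →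
          ∃ s ∈ C, F ∈ s}.Nonempty := by
      by_contra hemp
      rw [Set.not_nonempty_iff_eq_empty] at hemp
      have h0 : traceCoverNum n D X ε = 0 := by
        unfold traceCoverNum
        rw [hemp, Nat.sInf_empty]
      have hf0 : f ε = 0 := by
        rw [hfdef]
        simp only
        unfold traceEntropy
        rw [h0]
        simp
      linarith
    have hεε' : ε ≤ ε' := le_of_lt (lt_of_lt_of_le hεlt (min_le_left _ _))
    have hne' : {N | ∃ C : Finset (Set ((Fin n → ℂ) → ℂ)), C.card = N ∧
        (∀ s ∈ C, ∀ F ∈ s, ∀ G ∈ s, ∀ z ∈ X, dist (F z) (G z) ≤ 2 * ε') ∧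
        ∀ F : (Fin n → ℂ) → ℂ, DifferentiableOn ℂ F D → (∀ z ∈ D, ‖F z‖ ≤ 1) →
          ∃ s ∈ C, F ∈ s}.Nonempty := by
      obtain ⟨M, C, hCcard, hCdiam, hCcov⟩ := hne
      exact ⟨M, C, hCcard, fun t ht F hF G hG z hz =>
        (hCdiam t ht F hF G hG z hz).trans (by nlinarith), hCcov⟩
    obtain ⟨C, hCcard, hCdiam, hCcov⟩ := Nat.sInf_mem hne'
    exact ⟨C, hCcard, hCdiam, hCcov⟩
  -- eventual entropy bound
  have hev : ∀ᶠ ε in nhdsWithin (0:ℝ) (Set.Ioi 0),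
      f ε < c ∧ ε < Real.exp (-Real.exp 1) := by
    refine (Filter.eventually_lt_of_limsup_lt ?_ hbddAbove).and
      (eventually_of_mem hIooMem (fun x hx => hx.2))
    rw [hlimsup, hcdef]; linarith
  obtain ⟨u, hu, hsub⟩ := mem_nhdsGT_iff_exists_Ioo_subset.1 hev
  rw [Set.mem_Ioi] at hu
  -- large-N conditions
  have t1 : Tendsto (fun N : ℕ => ((N:ℝ))^(h-1)) atTop atTop :=
    (tendsto_rpow_atTop (by linarith)).comp tendsto_natCast_atTop_atTop
  have t2 : Tendsto (fun N : ℕ => ((N:ℝ))^h) atTop atTop :=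
    (tendsto_rpow_atTop (by linarith)).comp tendsto_natCast_atTop_atTop
  have t3 : Tendsto (fun N : ℕ => ((N:ℝ))^(h*δ)) atTop atTop :=
    (tendsto_rpow_atTop (by positivity)).comp tendsto_natCast_atTop_atTop
  have hbig : ∀ᶠ N : ℕ in atTop, 1 ≤ N ∧ -Real.log u ≤ ((N:ℝ))^h ∧
      2 ≤ ((N:ℝ))^h ∧ (n:ℝ) + Real.log (R+1) + 2 ≤ ((N:ℝ))^(h-1) ∧
      2 * ((n:ℝ))^(n:ℕ) * (3:ℝ)^c < ((N:ℝ))^(h*δ) := by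
    filter_upwards [eventually_ge_atTop 1, t2.eventually_ge_atTop (-Real.log u),
      t2.eventually_ge_atTop 2, t1.eventually_ge_atTop ((n:ℝ) + Real.log (R+1) + 2),
      t3.eventually_gt_atTop (2 * ((n:ℝ))^(n:ℕ) * (3:ℝ)^c)] with N a b cc d e
    exact ⟨a, b, cc, d, e⟩
  obtain ⟨N₀, hN₀⟩ := eventually_atTop.1 hbig
  refine ⟨N₀, fun N hN => ?_⟩
  obtain ⟨hN1, hNhu, hNh2, hNh1R, hNδ⟩ := hN₀ N hN
  have hNpos : (0:ℝ) < N := by exact_mod_cast hN1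
  have hN1R : (1:ℝ) ≤ N := by exact_mod_cast hN1
  set K : ℕ := N / n with hKdef
  set m : ℕ := (K+1)^n with hmdef
  set T : ℕ := Nat.floor (Real.exp ((N:ℝ)^h)) with hTdef
  have hexpT2 : (2:ℝ) ≤ Real.exp ((N:ℝ)^h) := by
    have := Real.add_one_le_exp ((N:ℝ)^h); linarith
  have hT2 : 2 ≤ T := Nat.le_floor (by exact_mod_cast hexpT2)
  have hT1R : (1:ℝ) ≤ (T:ℝ) := by
    have : (2:ℝ) ≤ (T:ℝ) := by exact_mod_cast hT2
    linarith
  have hTle : (T:ℝ) ≤ Real.exp ((N:ℝ)^h) := Nat.floor_le (Real.exp_pos _).le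
  have hTge : Real.exp ((N:ℝ)^h) / 2 ≤ (T:ℝ) := by
    have := Nat.sub_one_lt_floor (Real.exp ((N:ℝ)^h))
    rw [← hTdef] at this
    linarith
  have hm1 : 1 ≤ m := Nat.one_le_pow _ _ (Nat.succ_pos K)
  have hm1R : (1:ℝ) ≤ (m:ℝ) := by exact_mod_cast hm1
  have hRN1 : (1:ℝ) ≤ (R+1)^N := one_le_pow₀ (by linarith)
  set B : ℝ := ((m:ℝ) * (T:ℝ)) * (R+1)^N with hBdef
  have hB1 : 1 ≤ B := by
    have h12 : (1:ℝ) ≤ (m:ℝ)*(T:ℝ) := by nlinarith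
    have h13 := mul_le_mul h12 hRN1 zero_le_one (by positivity : (0:ℝ) ≤ (m:ℝ)*(T:ℝ))
    rw [hBdef]; linarith
  have hBpos : (0:ℝ) < B := by linarith
  set ε : ℝ := Real.exp (-(N:ℝ)^h) / (4*B) with hεdef
  have hε0 : 0 < ε := by positivity
  have hεlt : ε < Real.exp (-(N:ℝ)^h) := div_lt_self (Real.exp_pos _) (by linarith)
  have hεu : ε < u := by
    refine lt_of_lt_of_le hεlt ?_
    have hlgu : -(N:ℝ)^h ≤ Real.log u := by linarith
    exact (Real.le_log_iff_exp_le hu).1 hlgu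
  obtain ⟨hfεc, hεe⟩ := hsub ⟨hε0, hεu⟩
  obtain ⟨hLe, hden1⟩ := hden ε hε0 hεe
  set L : ℝ := Real.log (1/ε) with hLdef
  have hLpos : 0 < L := lt_trans (Real.exp_pos 1) hLe
  -- compute L
  have hLeq : L = (N:ℝ)^h + Real.log (4*B) := by
    rw [hLdef, one_div, Real.log_inv, hεdef,
      Real.log_div (Real.exp_ne_zero _) (by positivity), Real.log_exp]
    ring
  have hlog4 : Real.log 4 ≤ 2 := by
    have he1 : (2:ℝ) ≤ Real.exp 1 := by
      have := Real.add_one_le_exp (1:ℝ); linarith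
    have h4 : (4:ℝ) ≤ Real.exp 2 := by
      have he : Real.exp 2 = Real.exp 1 * Real.exp 1 := by
        rw [← Real.exp_add]; norm_num
      rw [he]; nlinarith [he1]
    calc Real.log 4 ≤ Real.log (Real.exp 2) := Real.log_le_log (by norm_num) h4
      _ = 2 := Real.log_exp _
  have hlogT : Real.log (T:ℝ) ≤ (N:ℝ)^h := by
    calc Real.log (T:ℝ) ≤ Real.log (Real.exp ((N:ℝ)^h)) :=
          Real.log_le_log (by linarith) hTle
      _ = (N:ℝ)^h := Real.log_exp _
  have hlogm : Real.log (m:ℝ) ≤ (n:ℝ) * N := by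
    have hmc : (m:ℝ) = (((K:ℝ))+1)^(n:ℕ) := by rw [hmdef]; push_cast; ring
    rw [hmc, Real.log_pow]
    have hKN : ((K:ℝ))+1 ≤ (N:ℝ)+1 := by
      have : K ≤ N := Nat.div_le_self N n
      have : (K:ℝ) ≤ (N:ℝ) := by exact_mod_cast this
      linarith
    have hlogK : Real.log (((K:ℝ))+1) ≤ (N:ℝ) := by
      calc Real.log (((K:ℝ))+1) ≤ Real.log ((N:ℝ)+1) :=
            Real.log_le_log (by positivity) hKN
        _ ≤ (N:ℝ)+1-1 := Real.log_le_sub_one_of_pos (by positivity)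
        _ = N := by ring
    calc ((n:ℕ):ℝ) * Real.log (((K:ℝ))+1) ≤ ((n:ℕ):ℝ) * (N:ℝ) :=
          mul_le_mul_of_nonneg_left hlogK (by positivity)
      _ = (n:ℝ) * N := by norm_cast
  have hlogR0 : 0 ≤ Real.log (R+1) := Real.log_nonneg (by linarith)
  have hlogB : Real.log B ≤ (n:ℝ)*N + (N:ℝ)^h + (N:ℝ)*Real.log (R+1) := by
    rw [hBdef, Real.log_mul (by positivity) (by positivity),
      Real.log_mul (by positivity) (by positivity), Real.log_pow]
    linarith
  have hNh : (N:ℝ)^h = (N:ℝ) * (N:ℝ)^(h-1) := by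
    have hsub1 : (N:ℝ)^(h-1) = (N:ℝ)^h / (N:ℝ)^(1:ℝ) := Real.rpow_sub hNpos h 1
    rw [hsub1, Real.rpow_one]
    field_simp
  have hL3 : L ≤ 3*(N:ℝ)^h := by
    rw [hLeq, Real.log_mul (by norm_num) (ne_of_gt hBpos)]
    have hmul : (N:ℝ) * ((n:ℝ) + Real.log (R+1) + 2) ≤ (N:ℝ) * (N:ℝ)^(h-1) :=
      mul_le_mul_of_nonneg_left hNh1R hNpos.le
    nlinarith
  -- bound on the covering number at ε
  have hfq : Real.log (traceEntropy n D X ε) / Real.log L < c := hfεc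
  have hdenL : 1 < Real.log L := hden1
  have hM : (traceCoverNum n D X ε : ℝ) ≤ Real.exp (L^c) := by
    rcases le_or_gt (traceCoverNum n D X ε) 1 with hle | hgt
    · have hle1 : (traceCoverNum n D X ε : ℝ) ≤ 1 := by exact_mod_cast hle
      refine hle1.trans ?_
      rw [show (1:ℝ) = Real.exp 0 from (Real.exp_zero).symm]
      exact Real.exp_le_exp.2 (Real.rpow_nonneg hLpos.le c)
    · have h2M : (2:ℝ) ≤ (traceCoverNum n D X ε : ℝ) := by exact_mod_cast hgt
      have hEl : Real.log 2 ≤ traceEntropy n D X ε := by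
        unfold traceEntropy
        exact Real.log_le_log (by norm_num) h2M
      have hEpos : 0 < traceEntropy n D X ε :=
        lt_of_lt_of_le (Real.log_pos (by norm_num)) hEl
      have hnum : Real.log (traceEntropy n D X ε) < c * Real.log L :=
        (div_lt_iff₀ (by linarith)).1 hfq
      have hEb : traceEntropy n D X ε < Real.exp (c * Real.log L) := by
        calc traceEntropy n D X ε = Real.exp (Real.log (traceEntropy n D X ε)) :=
              (Real.exp_log hEpos).symm
          _ < Real.exp (c * Real.log L) := Real.exp_lt_exp.2 hnum
      have hLc : Real.exp (c * Real.log L) = L^c := by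
        rw [Real.rpow_def_of_pos hLpos, mul_comm]
      have hMexp : (traceCoverNum n D X ε : ℝ) = Real.exp (traceEntropy n D X ε) := by
        unfold traceEntropy
        rw [Real.exp_log (by linarith : (0:ℝ) < (traceCoverNum n D X ε : ℝ))]
      have hfin : traceEntropy n D X ε ≤ L^c := by
        rw [← hLc]; exact hEb.le
      rw [hMexp]
      exact Real.exp_le_exp.2 hfin
  have hNh0 : (0:ℝ) < (N:ℝ)^h := Real.rpow_pos_of_pos hNpos h
  have hrpow1 : L^c ≤ (3*(N:ℝ)^h)^c := Real.rpow_le_rpow hLpos.le hL3 hc0.le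
  have hrpow2 : (3*(N:ℝ)^h)^c = 3^c * (N:ℝ)^(h*c) := by
    rw [Real.mul_rpow (by norm_num) hNh0.le, Real.rpow_mul hNpos.le]
  have hexp_sum : ((n:ℕ):ℝ) + h = h*c + h*δ := by
    rw [hcdef, hδdef]; field_simp; ring
  have hσsum : ∀ σ : Fin n → Fin (K+1), (∑ i, (σ i : ℕ)) ≤ N := by
    intro σ
    have hsK : (∑ i, (σ i : ℕ)) ≤ n * K := by
      calc (∑ i, (σ i : ℕ)) ≤ ∑ _i : Fin n, K :=
            Finset.sum_le_sum (fun i _ => Fin.is_le _)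
        _ = n * K := by simp [Finset.sum_const, Finset.card_univ, mul_comm]
    have hKN : n * K ≤ N := by
      rw [hKdef, mul_comm]
      exact Nat.div_mul_le_self N n
    exact le_trans hsK hKN
  have hmlogT : 3^c * (N:ℝ)^(h*c) < (m:ℝ) * Real.log (T:ℝ) := by
    have hlogTge : (N:ℝ)^h/2 ≤ Real.log (T:ℝ) := by
      have hlg := Real.log_le_log (by positivity) hTge
      rw [Real.log_div (Real.exp_ne_zero _) (by norm_num), Real.log_exp] at hlg
      have hlog2 : Real.log 2 ≤ 1 := by
        have := Real.log_two_lt_d9; linarith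
      linarith
    have hnn : 0 < n := hn1
    have hKn : N < n * (K+1) := by
      rw [hKdef]
      calc N = n * (N / n) + N % n := (Nat.div_add_mod N n).symm
        _ < n * (N / n) + n := Nat.add_lt_add_left (Nat.mod_lt N hnn) _
        _ = n * (N / n + 1) := by ring
    have hKnR : (N:ℝ) < (n:ℝ) * ((K:ℝ)+1) := by exact_mod_cast hKn
    have hdivle : (N:ℝ)/(n:ℝ) ≤ (K:ℝ)+1 := by
      rw [div_le_iff₀ hnR, mul_comm]; linarith
    have hmge : ((N:ℝ)/(n:ℝ))^(n:ℕ) ≤ (m:ℝ) := by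
      calc ((N:ℝ)/(n:ℝ))^(n:ℕ) ≤ ((K:ℝ)+1)^(n:ℕ) :=
            pow_le_pow_left₀ (by positivity) hdivle n
        _ = (m:ℝ) := by rw [hmdef]; push_cast; ring
    have hstep : ((N:ℝ)/(n:ℝ))^(n:ℕ) * ((N:ℝ)^h/2) ≤ (m:ℝ) * Real.log (T:ℝ) :=
      mul_le_mul hmge hlogTge (by positivity) (by linarith)
    refine lt_of_lt_of_le ?_ hstep
    have hrhs : ((N:ℝ)/(n:ℝ))^(n:ℕ) * ((N:ℝ)^h/2) =
        ((N:ℝ)^(n:ℕ) * (N:ℝ)^h) / (2*(n:ℝ)^(n:ℕ)) := by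
      rw [div_pow]; ring
    rw [hrhs, lt_div_iff₀ (by positivity)]
    have hNnh : (N:ℝ)^(n:ℕ) * (N:ℝ)^h = (N:ℝ)^(h*c) * (N:ℝ)^(h*δ) := by
      rw [← Real.rpow_natCast (N:ℝ) n, ← Real.rpow_add hNpos, ← Real.rpow_add hNpos,
        hexp_sum]
    rw [hNnh]
    calc 3^c * (N:ℝ)^(h*c) * (2*(n:ℝ)^(n:ℕ))
        = (N:ℝ)^(h*c) * (2 * ((n:ℝ))^(n:ℕ) * (3:ℝ)^c) := by ring
      _ < (N:ℝ)^(h*c) * ((N:ℝ)^(h*δ)) :=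
          mul_lt_mul_of_pos_left hNδ (Real.rpow_pos_of_pos hNpos _)
  have hTm : Real.exp (3^c * (N:ℝ)^(h*c)) < ((T:ℝ))^(m:ℕ) := by
    have hTpow : ((T:ℝ))^(m:ℕ) = Real.exp ((m:ℝ) * Real.log (T:ℝ)) := by
      rw [← Real.log_pow, Real.exp_log (by positivity)]
    rw [hTpow]
    exact Real.exp_lt_exp.2 hmlogT
  have hcount : (traceCoverNum n D X ε : ℝ) < ((T:ℝ))^(m:ℕ) := by
    refine lt_of_le_of_lt (hM.trans (Real.exp_le_exp.2 (hrpow1.trans_eq hrpow2))) hTm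
  obtain ⟨C, hCcard, hCdiam, hCcov⟩ := hcov_all ε hε0
  have hCardlt : C.card < T^m := by
    have hcast : (C.card : ℝ) < ((T^m : ℕ):ℝ) := by
      rw [hCcard]; push_cast; exact hcount
    exact_mod_cast hcast
  -- the polynomial construction
  set expOf : (Fin n → Fin (K+1)) → (Fin n →₀ ℕ) :=
    fun σ => Finsupp.equivFunOnFinite.symm (fun i => (σ i : ℕ)) with hexpOfdef
  have hexpOf_apply : ∀ σ i, expOf σ i = (σ i : ℕ) := by
    intro σ i
    simp [hexpOfdef, Finsupp.equivFunOnFinite]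
  have hexpOf_inj : Function.Injective expOf := by
    intro σ τ hστ
    funext i
    have h' : (σ i : ℕ) = (τ i : ℕ) := by
      rw [← hexpOf_apply σ i, ← hexpOf_apply τ i, hστ]
    exact Fin.ext h'
  set Pc : ((Fin n → Fin (K+1)) → Fin T) → MvPolynomial (Fin n) ℤ :=
    fun a => ∑ σ : Fin n → Fin (K+1),
      MvPolynomial.monomial (expOf σ) (((a σ : ℕ) : ℤ) + 1) with hPcdef
  have hPc_coeff : ∀ a σ₀, (Pc a).coeff (expOf σ₀) = ((a σ₀ : ℕ) : ℤ) + 1 := by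
    intro a σ₀
    rw [hPcdef]
    simp only
    rw [MvPolynomial.coeff_sum, Finset.sum_eq_single σ₀]
    · rw [MvPolynomial.coeff_monomial, if_pos rfl]
    · intro b _ hb
      rw [MvPolynomial.coeff_monomial, if_neg (fun hh => hb (hexpOf_inj hh))]
    · intro hmm; exact absurd (Finset.mem_univ σ₀) hmm
  have hPc_coeff0 : ∀ a d, (∀ σ, expOf σ ≠ d) → (Pc a).coeff d = 0 := by
    intro a d hd
    rw [hPcdef]
    simp only
    rw [MvPolynomial.coeff_sum]
    exact Finset.sum_eq_zero (fun σ _ => by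
      rw [MvPolynomial.coeff_monomial, if_neg (hd σ)])
  have hPc_deg : ∀ a, (Pc a).totalDegree ≤ N := by
    intro a
    refine (MvPolynomial.totalDegree_finset_sum _ _).trans ?_
    apply Finset.sup_le
    intro σ _
    refine (MvPolynomial.totalDegree_monomial_le _ _).trans ?_
    have hsum : ((expOf σ).sum fun _ => id) = ∑ i, (σ i : ℕ) := by
      rw [Finsupp.sum_fintype _ _ (fun i => rfl)]
      exact Finset.sum_congr rfl (fun i _ => by simp [hexpOf_apply])
    rw [hsum]
    exact hσsum σ
  have heval : ∀ a z, (MvPolynomial.aeval z) (Pc a) =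
      ∑ σ : Fin n → Fin (K+1), (((a σ : ℕ):ℂ) + 1) * ∏ i, z i ^ (σ i : ℕ) := by
    intro a z
    rw [hPcdef]
    simp only
    rw [map_sum]
    refine Finset.sum_congr rfl (fun σ _ => ?_)
    rw [MvPolynomial.aeval_monomial]
    congr 1
    · push_cast
      simp
    · rw [Finsupp.prod_fintype _ _ (fun i => pow_zero _)]
      exact Finset.prod_congr rfl (fun i _ => by rw [hexpOf_apply])
  have hdiffAll : ∀ a, Differentiable ℂ
      (fun z : Fin n → ℂ => (MvPolynomial.aeval z) (Pc a)) := by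
    intro a
    have hfe : (fun z : Fin n → ℂ => (MvPolynomial.aeval z) (Pc a)) =
        fun z => ∑ σ : Fin n → Fin (K+1),
          (((a σ : ℕ):ℂ) + 1) * ∏ i, z i ^ (σ i : ℕ) := funext (heval a)
    rw [hfe]
    apply Differentiable.fun_sum
    intro σ _
    apply Differentiable.const_mul
    apply diff_finset_prod'
    intro i
    exact ((ContinuousLinearMap.proj i :
      (Fin n → ℂ) →L[ℂ] ℂ).differentiable).pow _
  have hB_bound : ∀ a, ∀ z ∈ D, ‖(MvPolynomial.aeval z) (Pc a)‖ ≤ B := by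
    intro a z hz
    have hzR : ∀ i, ‖z i‖ ≤ R + 1 := by
      intro i
      have hzn : ‖z‖ < R + 1 := by
        rw [hDdef] at hz
        rwa [mem_ball_zero_iff] at hz
      exact le_of_lt (lt_of_le_of_lt (norm_le_pi_norm z i) hzn)
    rw [heval]
    refine (norm_sum_le _ _).trans ?_
    have hterm : ∀ σ : Fin n → Fin (K+1),
        ‖(((a σ : ℕ):ℂ) + 1) * ∏ i, z i ^ (σ i : ℕ)‖ ≤ (T:ℝ) * (R+1)^N := by
      intro σ
      rw [norm_mul]
      have hc1' : ‖(((a σ : ℕ):ℂ) + 1)‖ ≤ (T:ℝ) := by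
        have hcast : (((a σ : ℕ):ℂ) + 1) = (((a σ : ℕ) + 1 : ℕ) : ℂ) := by push_cast; ring
        rw [hcast, Complex.norm_natCast]
        exact_mod_cast Nat.succ_le_of_lt (Fin.is_lt (a σ))
      have hc2' : ‖∏ i, z i ^ (σ i : ℕ)‖ ≤ (R+1)^N := by
        have hstep1 : ‖∏ i, z i ^ (σ i:ℕ)‖ = ∏ i, ‖z i‖ ^ (σ i:ℕ) := by
          rw [norm_prod]
          exact Finset.prod_congr rfl (fun i _ => by rw [norm_pow])
        have hstep2 : (∏ i, ‖z i‖ ^ (σ i:ℕ)) ≤ ∏ i, (R+1:ℝ) ^ (σ i:ℕ) :=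
          Finset.prod_le_prod (fun i _ => by positivity)
            (fun i _ => pow_le_pow_left₀ (norm_nonneg _) (hzR i) _)
        have hstep3 : (∏ i, (R+1:ℝ) ^ (σ i:ℕ)) = (R+1:ℝ) ^ (∑ i, (σ i:ℕ)) :=
          Finset.prod_pow_eq_pow_sum _ _ _
        have hstep4 : (R+1:ℝ) ^ (∑ i, (σ i:ℕ)) ≤ (R+1)^N :=
          pow_le_pow_right₀ (by linarith) (hσsum σ)
        rw [hstep1]
        rw [hstep3] at hstep2
        exact hstep2.trans hstep4
      exact mul_le_mul hc1' hc2' (norm_nonneg _) (by linarith)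
    refine le_trans (Finset.sum_le_sum (fun σ _ => hterm σ)) ?_
    have hcards : (∑ _σ : Fin n → Fin (K+1), (T:ℝ)*(R+1)^N) = (m:ℝ) * ((T:ℝ)*(R+1)^N) := by
      rw [Finset.sum_const, Finset.card_univ]
      have hcm : Fintype.card (Fin n → Fin (K+1)) = m := by
        simp [Fintype.card_fun, hmdef]
      rw [hcm, nsmul_eq_mul]
    exact le_of_eq (by rw [hcards, hBdef]; ring)
  have hFmem : ∀ a, ∃ t ∈ C,
      (fun z => (MvPolynomial.aeval z) (Pc a) / (B:ℂ)) ∈ t := by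
    intro a
    apply hCcov
    · have hdq : Differentiable ℂ
          (fun z : Fin n → ℂ => (MvPolynomial.aeval z) (Pc a) / (B:ℂ)) := by
        simp only [div_eq_mul_inv]
        exact (hdiffAll a).mul_const _
      exact hdq.differentiableOn
    · intro z hz
      rw [norm_div]
      have hnB : ‖(B:ℂ)‖ = B := by
        rw [Complex.norm_real, Real.norm_eq_abs, abs_of_pos hBpos]
      rw [hnB, div_le_one hBpos]
      exact hB_bound a z hz
  choose g hg1 hg2 using hFmem
  obtain ⟨a₁, a₂, hane, hgeq⟩ :=
    Fintype.exists_ne_map_eq_of_card_lt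
      (fun a : (Fin n → Fin (K+1)) → Fin T => (⟨g a, hg1 a⟩ : {t // t ∈ C})) (by
        rw [Fintype.card_coe]
        have hcA : Fintype.card ((Fin n → Fin (K+1)) → Fin T) = T^m := by
          simp [Fintype.card_fun, hmdef]
        rw [hcA]
        exact hCardlt)
  refine ⟨Pc a₁ - Pc a₂, ?_, ?_, ?_, ?_⟩
  · -- nonzero
    obtain ⟨σ₀, hσ₀⟩ := Function.ne_iff.1 hane
    intro hzero
    have hc0' : (Pc a₁ - Pc a₂).coeff (expOf σ₀) = 0 := by rw [hzero]; simp
    rw [MvPolynomial.coeff_sub, hPc_coeff, hPc_coeff] at hc0'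
    have he1 : ((a₁ σ₀ : ℕ):ℤ) = ((a₂ σ₀ : ℕ):ℤ) := by omega
    have he2 : (a₁ σ₀ : ℕ) = (a₂ σ₀ : ℕ) := by exact_mod_cast he1
    exact hσ₀ (Fin.ext he2)
  · -- total degree
    calc (Pc a₁ - Pc a₂).totalDegree
        ≤ max (Pc a₁).totalDegree ((-(Pc a₂)).totalDegree) := by
          rw [sub_eq_add_neg]
          exact MvPolynomial.totalDegree_add _ _
      _ ≤ N := by
          rw [MvPolynomial.totalDegree_neg]
          exact max_le (hPc_deg a₁) (hPc_deg a₂)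
  · -- coefficient bound
    intro d
    by_cases hd : ∃ σ, expOf σ = d
    · obtain ⟨σ, rfl⟩ := hd
      rw [MvPolynomial.coeff_sub, hPc_coeff, hPc_coeff]
      have h1' : (a₁ σ : ℕ) < T := Fin.is_lt _
      have h2' : (a₂ σ : ℕ) < T := Fin.is_lt _
      have habs : |((a₁ σ:ℕ):ℤ) + 1 - (((a₂ σ:ℕ):ℤ) + 1)| ≤ (T:ℤ) := by
        rw [abs_le]; omega
      calc ((|((a₁ σ:ℕ):ℤ) + 1 - (((a₂ σ:ℕ):ℤ) + 1)| : ℤ) : ℝ) ≤ ((T:ℤ):ℝ) := by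
            exact_mod_cast habs
        _ = (T:ℝ) := by push_cast; ring
        _ ≤ Real.exp ((N:ℝ)^h) := hTle
    · push_neg at hd
      rw [MvPolynomial.coeff_sub, hPc_coeff0 _ _ hd, hPc_coeff0 _ _ hd]
      simp only [sub_zero, abs_zero, Int.cast_zero]
      exact (Real.exp_pos _).le
  · -- smallness on X
    intro z hz
    have hmem1 := hg2 a₁
    have hgg : g a₁ = g a₂ := congrArg Subtype.val hgeq
    have hmem2 : (fun z => (MvPolynomial.aeval z) (Pc a₂) / (B:ℂ)) ∈ g a₁ := by
      rw [hgg]; exact hg2 a₂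
    have hd := hCdiam (g a₁) (hg1 a₁) _ hmem1 _ hmem2 z hz
    have hdist : dist ((MvPolynomial.aeval z) (Pc a₁) / (B:ℂ))
        ((MvPolynomial.aeval z) (Pc a₂) / (B:ℂ))
        = ‖(MvPolynomial.aeval z) (Pc a₁ - Pc a₂)‖ / B := by
      rw [dist_eq_norm, div_sub_div_same, norm_div, map_sub]
      congr 1
      rw [Complex.norm_real, Real.norm_eq_abs, abs_of_pos hBpos]
    rw [hdist, div_le_iff₀ hBpos] at hd
    have heq2 : 2 * ε * B = Real.exp (-(N:ℝ)^h) / 2 := by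
      rw [hεdef]
      field_simp
      ring
    calc ‖(MvPolynomial.aeval z) (Pc a₁ - Pc a₂)‖ ≤ 2*ε*B := hd
      _ = Real.exp (-(N:ℝ)^h)/2 := heq2
      _ < Real.exp (-(N:ℝ)^h) := by
          linarith [Real.exp_pos (-(N:ℝ)^h)]
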